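/- arXiv:1202.1165 — 2 statements merged into one kernel-verified Lean document; each statement's English description precedes it below -/
import Mathlib

section
/- Fix an integer n ≥ 2 and k ∈ ℤ. Let A ∈ U(n) and let e₁ ∈ ℂⁿ denote the first standard basis vector. Then (det A)ᵏ · (A e₁) = e₁ if and only if the following hold: A_{i1} = 0 and A_{1j} = 0 for all indices i, j ≠ 1 (so A is block diagonal with respect to the splitting of the first coordinate from the remaining n−1 coordinates), and the entry a = A_{11} together with the lower-right (n−1) × (n−1) block A′ of A satisfy a^{k+1} · (det A′)ᵏ = 1, equivalently a^{k+1} = \overline{(det A′)}ᵏ. In other words, the isotropy group at e₁ of the action of U(n) on the unit sphere of ℂⁿ given by A · v = (det A)ᵏ A v is exactly the set of such block matrices. -/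
lemma det_block_aux (n : ℕ) (z : Fin n) (A : Matrix (Fin n) (Fin n) ℂ)
    (h1 : ∀ i ≠ z, A i z = 0) (h2 : ∀ j ≠ z, A z j = 0) :
    A.det = A z z *
      (A.submatrix (fun i : {i : Fin n // i ≠ z} => (i : Fin n))
        (fun j : {j : Fin n // j ≠ z} => (j : Fin n))).det := by
  classical
  haveI : Unique {i : Fin n // i = z} := ⟨⟨⟨z, rfl⟩⟩, fun i => Subtype.ext i.2⟩
  let e : {i : Fin n // i = z} ⊕ {i : Fin n // ¬ i = z} ≃ Fin n := Equiv.sumCompl (· = z)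
  have hd : A.det = (A.submatrix e e).det := (Matrix.det_submatrix_equiv_self e A).symm
  have hb : A.submatrix e e =
      Matrix.fromBlocks (Matrix.of fun _ _ => A z z) 0 0
        (A.submatrix (fun i : {i : Fin n // i ≠ z} => (i : Fin n))
          (fun j : {j : Fin n // j ≠ z} => (j : Fin n))) := by
    ext i j
    cases i with
    | inl i => cases j with
      | inl j => simp [e, Matrix.fromBlocks, i.2, j.2]
      | inr j => simp [e, Matrix.fromBlocks, i.2, h2 j j.2]
    | inr i => cases j with
      | inl j => simp [e, Matrix.fromBlocks, j.2, h1 i i.2]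
      | inr j => simp [e, Matrix.fromBlocks]
  rw [hd, hb, Matrix.det_fromBlocks_zero₂₁, Matrix.det_unique]
  rfl



/-- Appendix A.3: the isotropy group at `e₁` of the action of `U(n)` on the unit sphere of `ℂⁿ`
given by `A · v = (det A)ᵏ A v` consists exactly of the block-diagonal matrices
`diag(a, A′)` with `a^{k+1} (det A′)ᵏ = 1`. -/
theorem isotropy_of_det_twisted_action (n : ℕ) (hn : 2 ≤ n) (k : ℤ)
    (A : Matrix (Fin n) (Fin n) ℂ) (hA : A ∈ Matrix.unitaryGroup (Fin n) ℂ) :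
    (A.det ^ k) • A.mulVec (Pi.single (⟨0, by omega⟩ : Fin n) (1 : ℂ))
        = Pi.single (⟨0, by omega⟩ : Fin n) (1 : ℂ) ↔
      ((∀ i : Fin n, i ≠ ⟨0, by omega⟩ → A i ⟨0, by omega⟩ = 0) ∧
        (∀ j : Fin n, j ≠ ⟨0, by omega⟩ → A ⟨0, by omega⟩ j = 0) ∧
        (A ⟨0, by omega⟩ ⟨0, by omega⟩) ^ (k + 1) *
          (A.submatrix (fun i : {i : Fin n // i ≠ ⟨0, by omega⟩} => (i : Fin n))
            (fun j : {j : Fin n // j ≠ ⟨0, by omega⟩} => (j : Fin n))).det ^ k = 1) := by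
  classical
  set z : Fin n := ⟨0, by omega⟩ with hzdef
  -- det A ≠ 0
  have hdet : A.det ≠ 0 := by
    have h1 : A * star A = 1 := hA.2
    intro h
    have := congrArg Matrix.det h1
    rw [Matrix.det_mul, h, zero_mul, Matrix.det_one] at this
    exact zero_ne_one this
  have hdk : (A.det ^ k : ℂ) ≠ 0 := zpow_ne_zero k hdet
  have hmv : ∀ i, A.mulVec (Pi.single z 1) i = A i z := by
    intro i; simp [Matrix.mulVec_single]
  constructor
  · intro h
    have heval : ∀ i, A.det ^ k * A i z = (Pi.single z 1 : Fin n → ℂ) i := by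
      intro i
      have := congrFun h i
      simpa [hmv i] using this
    have h1 : ∀ i : Fin n, i ≠ z → A i z = 0 := by
      intro i hi
      have := heval i
      rw [Pi.single_eq_of_ne hi] at this
      exact (mul_eq_zero.mp this).resolve_left hdk
    have haz : A.det ^ k * A z z = 1 := by simpa using heval z
    have ha0 : A z z ≠ 0 := by
      intro h0; rw [h0, mul_zero] at haz; exact zero_ne_one haz
    have h2 : ∀ j : Fin n, j ≠ z → A z j = 0 := by
      intro j hj
      have hsA : star A * A = 1 := hA.1
      have := congrFun (congrFun hsA z) j
      rw [Matrix.mul_apply, Matrix.one_apply_ne (Ne.symm hj)] at this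
      have hsum : ∑ i, (starRingEnd ℂ) (A i z) * A i j = 0 := by
        simpa [Matrix.star_apply] using this
      rw [Finset.sum_eq_single z (fun i _ hi => by simp [h1 i hi])
        (fun hz => absurd (Finset.mem_univ z) hz)] at hsum
      rcases mul_eq_zero.mp hsum with h | h
      · exact absurd (by simpa using h) ha0
      · exact h
    refine ⟨h1, h2, ?_⟩
    have hdA := det_block_aux n z A h1 h2
    rw [hdA] at haz
    rw [mul_zpow] at haz
    rw [zpow_add_one₀ ha0, ← haz]; ring
  · rintro ⟨h1, h2, h3⟩
    have hdA := det_block_aux n z A h1 h2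
    have ha0 : A z z ≠ 0 := by
      intro h0
      rw [hdA, h0, zero_mul] at hdet
      exact hdet rfl
    have haz : A.det ^ k * A z z = 1 := by
      rw [hdA, mul_zpow, ← h3, zpow_add_one₀ ha0]; ring
    funext i
    by_cases hi : i = z
    · subst hi
      simp [hmv, haz]
    · simp [hmv, h1 i hi, Pi.single_eq_of_ne hi]
end

section
/- The normalizer of SO(3) in SU(3) equals SO(3)·Z(SU(3)); that is, an element A ∈ SU(3) satisfies A · SO(3) · A⁻¹ = SO(3) if and only if A = ω·O for some O ∈ SO(3) and some ω ∈ ℂ with ω³ = 1. -/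
open Matrix Complex

private noncomputable def cmap (M : Matrix (Fin 3) (Fin 3) ℂ) : Matrix (Fin 3) (Fin 3) ℂ :=
  M.map (starRingEnd ℂ)

private lemma cmap_mul (X Y : Matrix (Fin 3) (Fin 3) ℂ) : cmap (X * Y) = cmap X * cmap Y :=
  Matrix.map_mul

private lemma cmap_one : cmap (1 : Matrix (Fin 3) (Fin 3) ℂ) = 1 :=
  Matrix.map_one _ (map_zero _) (map_one _)

private lemma cmap_conjTranspose (X : Matrix (Fin 3) (Fin 3) ℂ) : cmap (Xᴴ) = Xᵀ := by
  ext i j; simp [cmap, Matrix.conjTranspose_apply]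

private lemma conjTranspose_transpose_cmap (X : Matrix (Fin 3) (Fin 3) ℂ) : (Xᴴ)ᵀ = cmap X := by
  ext i j; simp [cmap, Matrix.conjTranspose_apply]

private lemma cmap_smul (c : ℂ) (X : Matrix (Fin 3) (Fin 3) ℂ) :
    cmap (c • X) = (starRingEnd ℂ c) • cmap X := by
  ext i j; simp [cmap]

private lemma rmap_mul (X Y : Matrix (Fin 3) (Fin 3) ℝ) :
    (X * Y).map (Complex.ofReal) = X.map (Complex.ofReal) * Y.map (Complex.ofReal) :=
  Matrix.map_mul (f := Complex.ofRealHom)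

private lemma rmap_one : ((1 : Matrix (Fin 3) (Fin 3) ℝ).map (Complex.ofReal)) = 1 :=
  Matrix.map_one _ Complex.ofReal_zero Complex.ofReal_one

private lemma rmap_inj : Function.Injective
    (fun M : Matrix (Fin 3) (Fin 3) ℝ => M.map (Complex.ofReal)) :=
  Matrix.map_injective Complex.ofReal_injective

private lemma cmap_rmap (O : Matrix (Fin 3) (Fin 3) ℝ) :
    cmap (O.map (Complex.ofReal)) = O.map (Complex.ofReal) := by
  ext i j; simp [cmap, Complex.conj_ofReal]

private lemma star_real (O : Matrix (Fin 3) (Fin 3) ℝ) : star O = Oᵀ := by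
  rw [Matrix.star_eq_conjTranspose]; ext i j; simp [Matrix.conjTranspose_apply]

private noncomputable def Mz : Matrix (Fin 3) (Fin 3) ℂ := !![0,-1,0;1,0,0;0,0,1]
private noncomputable def Mx : Matrix (Fin 3) (Fin 3) ℂ := !![1,0,0;0,0,-1;0,1,0]
private noncomputable def Rz : Matrix (Fin 3) (Fin 3) ℝ := !![0,-1,0;1,0,0;0,0,1]
private noncomputable def Rx : Matrix (Fin 3) (Fin 3) ℝ := !![1,0,0;0,0,-1;0,1,0]

private lemma Rz_map : Rz.map (Complex.ofReal) = Mz := by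
  ext i j; fin_cases i <;> fin_cases j <;> simp [Rz, Mz, Matrix.vecHead, Matrix.vecTail]

private lemma Rx_map : Rx.map (Complex.ofReal) = Mx := by
  ext i j; fin_cases i <;> fin_cases j <;> simp [Rx, Mx, Matrix.vecHead, Matrix.vecTail]

private lemma Rz_orth : Rz ∈ Matrix.orthogonalGroup (Fin 3) ℝ := by
  rw [Matrix.mem_orthogonalGroup_iff]
  ext i j
  fin_cases i <;> fin_cases j <;>
    simp [Rz, Matrix.mul_apply, Fin.sum_univ_three, Matrix.one_apply, Fin.ext_iff, Matrix.vecHead, Matrix.vecTail, Matrix.transpose_apply]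

private lemma Rx_orth : Rx ∈ Matrix.orthogonalGroup (Fin 3) ℝ := by
  rw [Matrix.mem_orthogonalGroup_iff]
  ext i j
  fin_cases i <;> fin_cases j <;>
    simp [Rx, Matrix.mul_apply, Fin.sum_univ_three, Matrix.one_apply, Fin.ext_iff, Matrix.vecHead, Matrix.vecTail, Matrix.transpose_apply]

private lemma Rz_det : Rz.det = 1 := by
  simp [Rz, Matrix.det_fin_three]

private lemma Rx_det : Rx.det = 1 := by
  simp [Rx, Matrix.det_fin_three]

private lemma schur (S : Matrix (Fin 3) (Fin 3) ℂ) (hz : S * Mz = Mz * S) (hx : S * Mx = Mx * S) :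
    S = S 0 0 • 1 := by
  have hz' : ∀ i j, (S * Mz) i j = (Mz * S) i j := fun i j => by rw [hz]
  have hx' : ∀ i j, (S * Mx) i j = (Mx * S) i j := fun i j => by rw [hx]
  have e1 := hz' 0 0
  have e2 := hz' 0 1
  have e3 := hz' 0 2
  have e5 := hz' 1 2
  have e6 := hz' 2 0
  have e7 := hz' 2 1
  have f1 := hx' 0 1
  have f2 := hx' 1 2
  simp [Matrix.mul_apply, Fin.sum_univ_three, Mz, Mx, Matrix.vecHead, Matrix.vecTail]
    at e1 e2 e3 e5 e6 e7 f1 f2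
  have h02 : S 0 2 = 0 := by linear_combination e3/2 - e5/2
  have h12 : S 1 2 = 0 := by linear_combination e3/2 + e5/2
  have h01 : S 0 1 = 0 := by linear_combination e3/2 - e5/2 - f1
  have h10 : S 1 0 = 0 := by linear_combination e1 - e3/2 + e5/2 + f1
  have h20 : S 2 0 = 0 := by linear_combination -e6/2 - e7/2
  have h21 : S 2 1 = 0 := by linear_combination e6/2 - e7/2
  have h11 : S 1 1 = S 0 0 := by linear_combination -e2
  have h22 : S 2 2 = S 0 0 := by linear_combination -e2 - f2
  ext i j
  fin_cases i <;> fin_cases j <;>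
    simp [Matrix.one_apply, Fin.ext_iff, h01, h02, h10, h12, h20, h21, h11, h22]

private lemma commute_of_real (A N : Matrix (Fin 3) (Fin 3) ℂ)
    (h2 : Aᵀ * cmap A = 1) (hAu : A * star A = 1) (hAu' : star A * A = 1)
    (heq : cmap A * N * Aᵀ = A * N * star A) :
    (Aᵀ * A) * N = N * (Aᵀ * A) := by
  have e := congrArg (fun X => Aᵀ * X * A) heq
  have l : Aᵀ * (cmap A * N * Aᵀ) * A = N * (Aᵀ * A) := by
    calc Aᵀ * (cmap A * N * Aᵀ) * A = (Aᵀ * cmap A) * N * (Aᵀ * A) := by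
          simp only [Matrix.mul_assoc]
      _ = N * (Aᵀ * A) := by rw [h2, Matrix.one_mul]
  have r : Aᵀ * (A * N * star A) * A = (Aᵀ * A) * N := by
    calc Aᵀ * (A * N * star A) * A = (Aᵀ * A) * (N * (star A * A)) := by
          simp only [Matrix.mul_assoc]
      _ = (Aᵀ * A) * N := by rw [hAu', Matrix.mul_one]
  rw [l, r] at e
  exact e.symm


/-- Section 4: the normalizer of `SO(3)` in `SU(3)` is `SO(3)·Z(SU(3))`: an `A ∈ SU(3)`
conjugates `SO(3)` onto itself iff `A = ω·O` with `O ∈ SO(3)` and `ω³ = 1`. -/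
theorem normalizer_SO3_in_SU3 (A : Matrix (Fin 3) (Fin 3) ℂ)
    (hA : A ∈ Matrix.specialUnitaryGroup (Fin 3) ℂ) :
    ((fun M => A * M * A⁻¹) ''
        {M : Matrix (Fin 3) (Fin 3) ℂ | ∃ O : Matrix (Fin 3) (Fin 3) ℝ,
          O ∈ Matrix.orthogonalGroup (Fin 3) ℝ ∧ O.det = 1 ∧ M = O.map (Complex.ofReal)}
        = {M : Matrix (Fin 3) (Fin 3) ℂ | ∃ O : Matrix (Fin 3) (Fin 3) ℝ,
          O ∈ Matrix.orthogonalGroup (Fin 3) ℝ ∧ O.det = 1 ∧ M = O.map (Complex.ofReal)}) ↔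
      ∃ (ω : ℂ) (O : Matrix (Fin 3) (Fin 3) ℝ), ω ^ 3 = 1 ∧
        O ∈ Matrix.orthogonalGroup (Fin 3) ℝ ∧ O.det = 1 ∧
        A = ω • O.map (Complex.ofReal) := by
  rw [Matrix.mem_specialUnitaryGroup_iff] at hA
  obtain ⟨hAu, hAdet⟩ := hA
  rw [Matrix.mem_unitaryGroup_iff] at hAu
  have hAu' : star A * A = 1 := mul_eq_one_comm.mp hAu
  have hAinv : A⁻¹ = star A := Matrix.inv_eq_right_inv hAu
  have h2 : Aᵀ * cmap A = 1 := by
    have := congrArg cmap hAu'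
    rwa [cmap_mul, Matrix.star_eq_conjTranspose, cmap_conjTranspose, cmap_one] at this
  constructor
  · intro h
    have himg : ∀ N ∈ {M : Matrix (Fin 3) (Fin 3) ℂ | ∃ O : Matrix (Fin 3) (Fin 3) ℝ,
          O ∈ Matrix.orthogonalGroup (Fin 3) ℝ ∧ O.det = 1 ∧ M = O.map (Complex.ofReal)},
        cmap A * N * Aᵀ = A * N * star A := by
      intro N hN
      have hmem : A * N * A⁻¹ ∈ {M : Matrix (Fin 3) (Fin 3) ℂ | ∃ O : Matrix (Fin 3) (Fin 3) ℝ,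
          O ∈ Matrix.orthogonalGroup (Fin 3) ℝ ∧ O.det = 1 ∧ M = O.map (Complex.ofReal)} := by
        rw [← h]; exact Set.mem_image_of_mem _ hN
      obtain ⟨P, _, _, hPeq⟩ := hmem
      obtain ⟨Q, _, _, hQeq⟩ := hN
      have hreal : cmap (A * N * A⁻¹) = A * N * A⁻¹ := by rw [hPeq, cmap_rmap]
      rw [hAinv] at hreal
      rw [cmap_mul, cmap_mul, Matrix.star_eq_conjTranspose, cmap_conjTranspose] at hreal
      have hNr : cmap N = N := by rw [hQeq, cmap_rmap]
      rwa [hNr] at hreal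
    have hz := commute_of_real A Mz h2 hAu hAu'
      (himg Mz ⟨Rz, Rz_orth, Rz_det, Rz_map.symm⟩)
    have hx := commute_of_real A Mx h2 hAu hAu'
      (himg Mx ⟨Rx, Rx_orth, Rx_det, Rx_map.symm⟩)
    set l : ℂ := (Aᵀ * A) 0 0 with hl
    have hS : Aᵀ * A = l • 1 := schur _ hz hx
    have hdetS : (Aᵀ * A).det = 1 := by
      rw [Matrix.det_mul, Matrix.det_transpose, hAdet, mul_one]
    have hl3 : l ^ 3 = 1 := by
      rw [hS] at hdetS
      rwa [Matrix.det_smul, Matrix.det_one, mul_one, Fintype.card_fin] at hdetS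
    have hl0 : l ≠ 0 := by
      intro h0; rw [h0] at hl3; norm_num at hl3
    have hnsq : Complex.normSq l = 1 := by
      have h3 : Complex.normSq l ^ 3 = 1 := by
        have := congrArg Complex.normSq hl3
        rwa [map_pow, _root_.map_one] at this
      nlinarith [Complex.normSq_nonneg l, sq_nonneg (Complex.normSq l - 1), sq_nonneg (Complex.normSq l + 1)]
    have hconj : (starRingEnd ℂ) l = l ^ 2 := by
      apply mul_left_cancel₀ hl0
      rw [Complex.mul_conj, hnsq]
      push_cast
      linear_combination -hl3
    have hAt : Aᵀ = l • star A := by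
      have := congrArg (fun X => X * star A) hS
      rwa [Matrix.mul_assoc, hAu, Matrix.mul_one, Matrix.smul_mul, Matrix.one_mul] at this
    have hAc : A = l • cmap A := by
      have := congrArg Matrix.transpose hAt
      rwa [Matrix.transpose_transpose, Matrix.transpose_smul, Matrix.star_eq_conjTranspose,
        conjTranspose_transpose_cmap] at this
    have hcA : cmap A = l ^ 2 • A := by
      have := congrArg (fun X => (l ^ 2 : ℂ) • X) hAc
      simp only [smul_smul] at this
      rw [show l ^ 2 * l = 1 by linear_combination hl3, one_smul] at this
      exact this.symm
    set Oc : Matrix (Fin 3) (Fin 3) ℂ := l • A with hOcdef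
    have hOc_real : cmap Oc = Oc := by
      rw [hOcdef, cmap_smul, hconj, hcA, smul_smul]
      rw [show l ^ 2 * l ^ 2 = l by linear_combination l * hl3]
    set O : Matrix (Fin 3) (Fin 3) ℝ := Matrix.of (fun i j => (Oc i j).re) with hOdef
    have hmapO : O.map (Complex.ofReal) = Oc := by
      ext i j
      have hcc : (starRingEnd ℂ) (Oc i j) = Oc i j := by
        have := congrFun (congrFun hOc_real i) j
        simpa [cmap] using this
      simpa [hOdef, Matrix.map_apply] using Complex.conj_eq_iff_re.mp hcc
    have hOcOc : Ocᵀ * Oc = 1 := by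
      rw [hOcdef, Matrix.transpose_smul, Matrix.smul_mul, Matrix.mul_smul, hS,
        smul_smul, smul_smul, show l * l * l = 1 by linear_combination hl3, one_smul]
    have hOorth : O ∈ Matrix.orthogonalGroup (Fin 3) ℝ := by
      rw [Matrix.mem_orthogonalGroup_iff']
      apply rmap_inj
      simp only
      rw [rmap_mul, Matrix.transpose_map, hmapO, rmap_one]
      exact hOcOc
    have hOdet : O.det = 1 := by
      have hc : (O.det : ℂ) = 1 := by
        rw [show (O.det : ℂ) = Complex.ofRealHom O.det from rfl, RingHom.map_det,
          RingHom.mapMatrix_apply]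
        rw [show O.map (Complex.ofRealHom) = Oc from hmapO, hOcdef, Matrix.det_smul,
          Fintype.card_fin, hAdet, mul_one, hl3]
      exact_mod_cast hc
    refine ⟨l ^ 2, O, ?_, hOorth, hOdet, ?_⟩
    · rw [← pow_mul, show 2 * 3 = 3 * 2 by ring, pow_mul, hl3, one_pow]
    · rw [hmapO, hOcdef, smul_smul, show l ^ 2 * l = 1 by linear_combination hl3, one_smul]
  · rintro ⟨ω, O, hω, hO, hOdet, hAeq⟩
    set C : Matrix (Fin 3) (Fin 3) ℂ := O.map (Complex.ofReal) with hCdef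
    have hω0 : ω ≠ 0 := by
      intro h0; rw [h0] at hω; norm_num at hω
    have hOT : Oᵀ ∈ Matrix.orthogonalGroup (Fin 3) ℝ := by
      rw [← star_real]; exact Unitary.star_mem hO
    have hOO : O * Oᵀ = 1 := by
      have h' := hO
      rwa [Matrix.mem_orthogonalGroup_iff] at h'
    have hCC : C * Cᵀ = 1 := by
      rw [hCdef, ← Matrix.transpose_map, ← rmap_mul, hOO, rmap_one]
    have hAinv2 : A⁻¹ = ω⁻¹ • Cᵀ := by
      apply Matrix.inv_eq_right_inv
      rw [hAeq, Matrix.smul_mul, Matrix.mul_smul, smul_smul,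
        mul_inv_cancel₀ hω0, one_smul, hCC]
    have hconjM : ∀ M : Matrix (Fin 3) (Fin 3) ℂ, A * M * A⁻¹ = C * M * Cᵀ := by
      intro M
      rw [hAinv2, hAeq, Matrix.smul_mul, Matrix.smul_mul, Matrix.mul_smul, smul_smul,
        mul_inv_cancel₀ hω0, one_smul]
    ext M'
    constructor
    · rintro ⟨M, ⟨P, hP, hPdet, rfl⟩, rfl⟩
      simp only [Set.mem_setOf_eq]
      refine ⟨O * P * Oᵀ, mul_mem (mul_mem hO hP) hOT, ?_, ?_⟩
      · rw [Matrix.det_mul, Matrix.det_mul, Matrix.det_transpose, hPdet, hOdet, mul_one, one_mul]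
      · rw [hconjM, hCdef, rmap_mul, rmap_mul, Matrix.transpose_map]
    · rintro ⟨P, hP, hPdet, rfl⟩
      refine ⟨(Oᵀ * P * O).map (Complex.ofReal),
        ⟨Oᵀ * P * O, mul_mem (mul_mem hOT hP) hO, ?_, rfl⟩, ?_⟩
      · rw [Matrix.det_mul, Matrix.det_mul, Matrix.det_transpose, hPdet, hOdet, mul_one, one_mul]
      · show A * (Oᵀ * P * O).map (Complex.ofReal) * A⁻¹ = P.map (Complex.ofReal)
        rw [hconjM, hCdef, ← Matrix.transpose_map, ← rmap_mul, ← rmap_mul,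
          show O * (Oᵀ * P * O) * Oᵀ = P by
            calc O * (Oᵀ * P * O) * Oᵀ = (O * Oᵀ) * P * (O * Oᵀ) := by
                  simp only [Matrix.mul_assoc]
              _ = P := by rw [hOO, Matrix.one_mul, Matrix.mul_one]]
end
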